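/- Let (𝒱, ⊗, I) be a monoidal category and (!, ε, δ, m_⊗, m_I) a monoidal comonad on 𝒱. Then 𝒱 with unit I, tensor A ⊗^! B := A ⊗ !B, associator (A ⊗ !B) ⊗ !C → A ⊗ !(B ⊗ !C) given by α followed by 1 ⊗ H (where H = m_⊗ ∘ (1 ⊗ δ) is the fusion operator), left unitor ε ∘ λ, and right unitor (1 ⊗ m_I) ∘ ρ, is a (right-)skew monoidal category. -/

import Mathlib

universe v u

open CategoryTheory MonoidalCategory

variable (V : Type u) [Category.{v} V] [MonoidalCategory V]

/-- A (symmetric-free) monoidal comonad `(!, ε, δ, m_⊗, m_I)` on a monoidal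
category `V`: a comonad whose underlying functor is lax monoidal, and whose
counit and comultiplication are monoidal natural transformations. -/
structure MonComonad where
  Q : V ⥤ V
  ε : Q ⟶ 𝟭 V
  δ : Q ⟶ Q ⋙ Q
  counit_left : ∀ X, δ.app X ≫ ε.app (Q.obj X) = 𝟙 (Q.obj X)
  counit_right : ∀ X, δ.app X ≫ Q.map (ε.app X) = 𝟙 (Q.obj X)
  coassoc : ∀ X, δ.app X ≫ δ.app (Q.obj X) = δ.app X ≫ Q.map (δ.app X)
  mI : 𝟙_ V ⟶ Q.obj (𝟙_ V)
  mT : ∀ X Y, Q.obj X ⊗ Q.obj Y ⟶ Q.obj (X ⊗ Y)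
  mT_natural : ∀ {X X' Y Y'} (f : X ⟶ X') (g : Y ⟶ Y'),
    (Q.map f ⊗ₘ Q.map g) ≫ mT X' Y' = mT X Y ≫ Q.map (f ⊗ₘ g)
  lax_assoc : ∀ X Y Z,
    (mT X Y ⊗ₘ 𝟙 (Q.obj Z)) ≫ mT (X ⊗ Y) Z ≫ Q.map (α_ X Y Z).hom =
      (α_ (Q.obj X) (Q.obj Y) (Q.obj Z)).hom ≫ (𝟙 (Q.obj X) ⊗ₘ mT Y Z) ≫
        mT X (Y ⊗ Z)
  lax_left_unit : ∀ X,
    (λ_ (Q.obj X)).hom = (mI ⊗ₘ 𝟙 (Q.obj X)) ≫ mT (𝟙_ V) X ≫ Q.map (λ_ X).hom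
  lax_right_unit : ∀ X,
    (ρ_ (Q.obj X)).hom = (𝟙 (Q.obj X) ⊗ₘ mI) ≫ mT X (𝟙_ V) ≫ Q.map (ρ_ X).hom
  ε_mI : mI ≫ ε.app (𝟙_ V) = 𝟙 (𝟙_ V)
  ε_mT : ∀ X Y, mT X Y ≫ ε.app (X ⊗ Y) = (ε.app X ⊗ₘ ε.app Y)
  δ_mI : mI ≫ δ.app (𝟙_ V) = mI ≫ Q.map mI
  δ_mT : ∀ X Y, mT X Y ≫ δ.app (X ⊗ Y) =
    (δ.app X ⊗ₘ δ.app Y) ≫ mT (Q.obj X) (Q.obj Y) ≫ Q.map (mT X Y)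

variable {V}

namespace MonComonad

variable (M : MonComonad V)

/-- The warped tensor `A ⊗^! B := A ⊗ !B`. -/
def tW (A B : V) : V := A ⊗ M.Q.obj B

/-- The warped tensor of morphisms: `f ⊗ !g`. -/
def hW {A B X Y : V} (f : A ⟶ B) (g : X ⟶ Y) : M.tW A X ⟶ M.tW B Y :=
  f ⊗ₘ M.Q.map g

/-- The fusion operator `H = m_⊗ ∘ (1 ⊗ δ) : !A ⊗ !B ⟶ !(A ⊗ !B)`. -/
def fus (A B : V) : M.Q.obj A ⊗ M.Q.obj B ⟶ M.Q.obj (M.tW A B) :=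
  (𝟙 (M.Q.obj A) ⊗ₘ M.δ.app B) ≫ M.mT A (M.Q.obj B)

/-- The warped associator `α` followed by `1 ⊗ H`. -/
def aW (A B C : V) : M.tW (M.tW A B) C ⟶ M.tW A (M.tW B C) :=
  (α_ A (M.Q.obj B) (M.Q.obj C)).hom ≫ (𝟙 A ⊗ₘ M.fus B C)

/-- The warped left unitor `ε ∘ λ`. -/
def lW (A : V) : M.tW (𝟙_ V) A ⟶ A := (λ_ (M.Q.obj A)).hom ≫ M.ε.app A

/-- The warped right unitor `(1 ⊗ m_I) ∘ ρ` (in Mathlib the canonical map `A ⟶ A ⊗ 𝟙_V` is `(ρ_ A).inv`). -/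
def rW (A : V) : A ⟶ M.tW A (𝟙_ V) := (ρ_ A).inv ≫ (𝟙 A ⊗ₘ M.mI)

end MonComonad

/-!
STATEMENT 11: Let `(𝒱, ⊗, I)` be a monoidal category and
`(!, ε, δ, m_⊗, m_I)` a monoidal comonad on `𝒱`. Then `𝒱` with unit `I`,
tensor `A ⊗^! B := A ⊗ !B`, associator `(A ⊗ !B) ⊗ !C → A ⊗ !(B ⊗ !C)` given
by `α` followed by `1 ⊗ H` (where `H = m_⊗ ∘ (1 ⊗ δ)` is the fusion operator),
left unitor `ε ∘ λ`, and right unitor `(1 ⊗ m_I) ∘ ρ`, is a (right-)skew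
monoidal category: the constraints are natural and satisfy the pentagon axiom,
`λ_I ∘ ρ_I = 1`, and the three (skew-oriented) unit axioms.
-/

namespace MonComonad

variable {M : MonComonad V}

attribute [local simp] tW hW fus aW lW rW
attribute [reducible] tW

lemma δ_nat {X Y : V} (f : X ⟶ Y) :
    M.Q.map f ≫ M.δ.app Y = M.δ.app X ≫ M.Q.map (M.Q.map f) := by
  simpa using M.δ.naturality f

lemma ε_nat {X Y : V} (f : X ⟶ Y) :
    M.Q.map f ≫ M.ε.app Y = M.ε.app X ≫ f := by
  simpa using M.ε.naturality f

lemma fus_natural {A A' B B' : V} (f : A ⟶ A') (g : B ⟶ B') :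
    (M.Q.map f ⊗ₘ M.Q.map g) ≫ M.fus A' B' = M.fus A B ≫ M.Q.map (M.hW f g) := by
  simp only [fus, hW]
  rw [← Category.assoc, tensorHom_comp_tensorHom, Category.comp_id, δ_nat,
    ← Category.id_comp (M.Q.map f), ← tensorHom_comp_tensorHom, Category.assoc, M.mT_natural]
  simp

lemma fus_ε (A B : V) :
    M.fus A B ≫ M.ε.app (M.tW A B) = (M.ε.app A ⊗ₘ 𝟙 (M.Q.obj B)) := by
  simp only [fus, tW, Category.assoc, M.ε_mT]
  rw [tensorHom_comp_tensorHom, Category.id_comp, M.counit_left]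

lemma fus_δ (A B : V) :
    M.fus A B ≫ M.δ.app (M.tW A B) =
      (M.δ.app A ⊗ₘ M.δ.app B) ≫ M.mT (M.Q.obj A) (M.Q.obj B) ≫ M.Q.map (M.fus A B) := by
  simp only [fus, tW, Category.assoc, M.δ_mT]
  rw [← Category.assoc, tensorHom_comp_tensorHom, Category.id_comp, M.coassoc,
    ← Category.comp_id (M.δ.app A), ← tensorHom_comp_tensorHom, Category.comp_id, Category.assoc]
  congr 1
  have h := M.mT_natural (𝟙 (M.Q.obj A)) (M.δ.app B)
  rw [M.Q.map_id] at h
  simp only [Functor.comp_obj] at h ⊢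
  rw [← Category.assoc, h, Category.assoc, ← M.Q.map_comp]

lemma exch {W X Y Z : V} (f : W ⟶ X) (g : Y ⟶ Z) :
    (f ⊗ₘ 𝟙 Y) ≫ (𝟙 X ⊗ₘ g) = (𝟙 W ⊗ₘ g) ≫ (f ⊗ₘ 𝟙 Z) := by
  rw [tensorHom_comp_tensorHom, tensorHom_comp_tensorHom]; simp

lemma fus_pentagon (A B C : V) :
    (M.fus A B ⊗ₘ 𝟙 (M.Q.obj C)) ≫ M.fus (M.tW A B) C ≫ M.Q.map (M.aW A B C) =
      (α_ (M.Q.obj A) (M.Q.obj B) (M.Q.obj C)).hom ≫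
        (𝟙 (M.Q.obj A) ⊗ₘ M.fus B C) ≫ M.fus A (M.tW B C) := by
  have nat := M.mT_natural (𝟙 A) (M.fus B C)
  rw [M.Q.map_id] at nat
  simp only [tW] at nat ⊢
  have lax := M.lax_assoc A (M.Q.obj B) (M.Q.obj C)
  have e1 : (M.fus A B ⊗ₘ 𝟙 (M.Q.obj C)) ≫ (𝟙 (M.Q.obj (A ⊗ M.Q.obj B)) ⊗ₘ M.δ.app C)
      = (𝟙 (M.Q.obj A ⊗ M.Q.obj B) ⊗ₘ M.δ.app C) ≫
        (M.fus A B ⊗ₘ 𝟙 (M.Q.obj (M.Q.obj C))) := by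
    rw [tensorHom_comp_tensorHom, tensorHom_comp_tensorHom]
    simp only [tW, Functor.comp_obj, Category.id_comp, Category.comp_id]
  have e2 : (M.fus A B ⊗ₘ 𝟙 (M.Q.obj (M.Q.obj C)))
      = ((𝟙 (M.Q.obj A) ⊗ₘ M.δ.app B) ⊗ₘ 𝟙 (M.Q.obj (M.Q.obj C))) ≫
        (M.mT A (M.Q.obj B) ⊗ₘ 𝟙 (M.Q.obj (M.Q.obj C))) := by
    rw [fus, tensorHom_comp_tensorHom]
    simp only [tW, Functor.comp_obj, Category.id_comp, Category.comp_id]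
  have e3 : (𝟙 (M.Q.obj A ⊗ M.Q.obj B) ⊗ₘ M.δ.app C) ≫
        ((𝟙 (M.Q.obj A) ⊗ₘ M.δ.app B) ⊗ₘ 𝟙 (M.Q.obj (M.Q.obj C)))
      = ((𝟙 (M.Q.obj A) ⊗ₘ M.δ.app B) ⊗ₘ M.δ.app C) := by
    rw [tensorHom_comp_tensorHom]
    simp only [tW, Functor.comp_obj, Category.id_comp, Category.comp_id]
  have e4 : (𝟙 (M.Q.obj A) ⊗ₘ M.fus B C) ≫ (𝟙 (M.Q.obj A) ⊗ₘ M.δ.app (B ⊗ M.Q.obj C))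
      = (𝟙 (M.Q.obj A) ⊗ₘ (M.fus B C ≫ M.δ.app (B ⊗ M.Q.obj C))) := by
    rw [tensorHom_comp_tensorHom]
    simp only [tW, Functor.comp_obj, Category.id_comp, Category.comp_id]
  have e5 := M.fus_δ B C
  simp only [tW] at e5
  have anat := associator_naturality (𝟙 (M.Q.obj A)) (M.δ.app B) (M.δ.app C)
  simp only [Functor.comp_obj] at anat
  calc (M.fus A B ⊗ₘ 𝟙 (M.Q.obj C)) ≫ M.fus (A ⊗ M.Q.obj B) C ≫ M.Q.map (M.aW A B C)
      = (M.fus A B ⊗ₘ 𝟙 (M.Q.obj C)) ≫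
          ((𝟙 (M.Q.obj (A ⊗ M.Q.obj B)) ⊗ₘ M.δ.app C) ≫
            M.mT (A ⊗ M.Q.obj B) (M.Q.obj C)) ≫
          M.Q.map (α_ A (M.Q.obj B) (M.Q.obj C)).hom ≫
          M.Q.map (𝟙 A ⊗ₘ M.fus B C) := by
        rw [aW, M.Q.map_comp]; rfl
    _ = (α_ (M.Q.obj A) (M.Q.obj B) (M.Q.obj C)).hom ≫
        (𝟙 (M.Q.obj A) ⊗ₘ M.fus B C) ≫ M.fus A (B ⊗ M.Q.obj C) := by
        simp only [Category.assoc]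
        slice_lhs 1 2 => rw [e1]
        slice_lhs 2 2 => rw [e2]
        slice_lhs 3 5 => rw [lax]
        slice_lhs 5 6 => rw [← nat]
        slice_lhs 1 2 => rw [e3]
        slice_lhs 1 2 => rw [anat]
        rw [show M.fus A (B ⊗ M.Q.obj C) = (𝟙 (M.Q.obj A) ⊗ₘ M.δ.app (B ⊗ M.Q.obj C)) ≫
          M.mT A (M.Q.obj (B ⊗ M.Q.obj C)) from rfl]
        slice_rhs 2 3 => rw [e4]
        rw [e5]
        simp only [← tensorHom_comp_tensorHom, Category.id_comp, Category.comp_id, Category.assoc,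
          MonoidalCategory.id_tensorHom_id]
        simp [tensorHom_comp_tensorHom]

end MonComonad

namespace MonComonad
variable {M : MonComonad V}

lemma part1 {A A' B B' C C' : V} (f : A ⟶ A') (g : B ⟶ B') (h : C ⟶ C') :
    M.hW (M.hW f g) h ≫ M.aW A' B' C' = M.aW A B C ≫ M.hW f (M.hW g h) := by
  simp only [hW, aW, tW]
  rw [← Category.assoc, associator_naturality]
  simp only [Category.assoc]
  congr 1
  rw [tensorHom_comp_tensorHom, Category.comp_id, fus_natural, hW, ← Category.id_comp f,
    ← tensorHom_comp_tensorHom]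
  simp

lemma part2 {A B : V} (f : A ⟶ B) :
    M.hW (𝟙 (𝟙_ V)) f ≫ M.lW B = M.lW A ≫ f := by
  simp only [hW, lW, M.Q.map_id, tW, id_tensorHom]
  rw [← Category.assoc, leftUnitor_naturality, Category.assoc, ε_nat]
  simp only [Category.assoc]

lemma part3 {A B : V} (f : A ⟶ B) :
    f ≫ M.rW B = M.rW A ≫ M.hW f (𝟙 (𝟙_ V)) := by
  simp only [hW, rW, M.Q.map_id, tW, id_tensorHom, tensorHom_id]
  rw [← Category.assoc, rightUnitor_inv_naturality]
  simp only [Category.assoc]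
  rw [← whisker_exchange]

lemma part5 : M.rW (𝟙_ V) ≫ M.lW (𝟙_ V) = 𝟙 (𝟙_ V) := by
  simp only [rW, lW, id_tensorHom, Category.assoc]
  rw [leftUnitor_naturality_assoc, M.ε_mI, Category.comp_id, unitors_equal,
    Iso.inv_hom_id]

lemma part6 (A B : V) :
    M.aW (𝟙_ V) A B ≫ M.lW (M.tW A B) = M.hW (M.lW A) (𝟙 B) := by
  simp only [aW, lW, hW, tW, M.Q.map_id, id_tensorHom, Category.assoc]
  rw [leftUnitor_naturality_assoc]
  have := M.fus_ε A B
  simp only [tW] at this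
  rw [this, leftUnitor_tensor_hom_assoc]
  simp [tensorHom_id]

lemma part7 (A B : V) :
    M.hW (M.rW A) (𝟙 B) ≫ M.aW A (𝟙_ V) B ≫ M.hW (𝟙 A) (M.lW B) =
      𝟙 (M.tW A B) := by
  have lun := leftUnitor_naturality (M.δ.app B)
  simp only [Functor.comp_obj] at lun
  have inner : (λ_ (M.Q.obj B)).inv ≫ (M.mI ⊗ₘ 𝟙 (M.Q.obj B)) ≫ M.fus (𝟙_ V) B ≫
      M.Q.map (M.lW B) = 𝟙 (M.Q.obj B) := by
    rw [fus, lW, M.Q.map_comp]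
    have e : (M.mI ⊗ₘ 𝟙 (M.Q.obj B)) ≫ (𝟙 (M.Q.obj (𝟙_ V)) ⊗ₘ M.δ.app B) =
        (𝟙 (𝟙_ V) ⊗ₘ M.δ.app B) ≫ (M.mI ⊗ₘ 𝟙 (M.Q.obj (M.Q.obj B))) := by
      rw [tensorHom_comp_tensorHom, tensorHom_comp_tensorHom]
      simp only [Functor.comp_obj, Category.id_comp, Category.comp_id]
    slice_lhs 2 3 => rw [e]
    have lu := M.lax_left_unit (M.Q.obj B)
    slice_lhs 3 5 => rw [← lu]
    rw [id_tensorHom]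
    slice_lhs 2 3 => rw [lun]
    slice_lhs 3 4 => rw [M.counit_right]
    simp
  have e5 : ((ρ_ A).inv ⊗ₘ 𝟙 (M.Q.obj B)) ≫ (α_ A (𝟙_ V) (M.Q.obj B)).hom =
      𝟙 A ⊗ₘ (λ_ (M.Q.obj B)).inv := by
    simp only [tensorHom_id, id_tensorHom]; monoidal
  have e4 := associator_naturality (𝟙 A) M.mI (𝟙 (M.Q.obj B))
  have st : (M.rW A ⊗ₘ 𝟙 (M.Q.obj B)) ≫ (α_ A (M.Q.obj (𝟙_ V)) (M.Q.obj B)).hom =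
      𝟙 A ⊗ₘ ((λ_ (M.Q.obj B)).inv ≫ (M.mI ⊗ₘ 𝟙 (M.Q.obj B))) := by
    rw [rW]
    have split : (((ρ_ A).inv ≫ (𝟙 A ⊗ₘ M.mI)) ⊗ₘ 𝟙 (M.Q.obj B)) =
        ((ρ_ A).inv ⊗ₘ 𝟙 (M.Q.obj B)) ≫ ((𝟙 A ⊗ₘ M.mI) ⊗ₘ 𝟙 (M.Q.obj B)) := by
      rw [tensorHom_comp_tensorHom, Category.comp_id]
    rw [split, Category.assoc, e4, ← Category.assoc, e5, tensorHom_comp_tensorHom,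
      Category.id_comp]
  simp only [hW, aW, tW, M.Q.map_id, Category.assoc]
  slice_lhs 1 2 => rw [st]
  simp only [tensorHom_comp_tensorHom, Category.id_comp, Category.assoc]
  rw [inner]
  simp

lemma part8 (A B : V) :
    M.rW (M.tW A B) ≫ M.aW A B (𝟙_ V) = M.hW (𝟙 A) (M.rW B) := by
  have runat := M.lax_right_unit B
  have mnat := M.mT_natural (𝟙 B) M.mI
  rw [M.Q.map_id] at mnat
  have inner : (ρ_ (M.Q.obj B)).inv ≫ (𝟙 (M.Q.obj B) ⊗ₘ M.mI) ≫ M.fus B (𝟙_ V) =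
      M.Q.map (M.rW B) := by
    rw [fus]
    have e : (𝟙 (M.Q.obj B) ⊗ₘ M.mI) ≫ (𝟙 (M.Q.obj B) ⊗ₘ M.δ.app (𝟙_ V)) =
        (𝟙 (M.Q.obj B) ⊗ₘ M.mI) ≫ (𝟙 (M.Q.obj B) ⊗ₘ M.Q.map M.mI) := by
      rw [tensorHom_comp_tensorHom, tensorHom_comp_tensorHom, M.δ_mI]
    slice_lhs 2 3 => rw [e]
    slice_lhs 3 4 => rw [mnat]
    have e3 : (𝟙 (M.Q.obj B) ⊗ₘ M.mI) ≫ M.mT B (𝟙_ V) =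
        (ρ_ (M.Q.obj B)).hom ≫ M.Q.map (ρ_ B).inv := by
      have h : ((𝟙 (M.Q.obj B) ⊗ₘ M.mI) ≫ M.mT B (𝟙_ V)) ≫ M.Q.map (ρ_ B).hom =
          (ρ_ (M.Q.obj B)).hom := by rw [Category.assoc, ← runat]
      rw [← h]
      simp [← M.Q.map_comp]
    slice_lhs 2 3 => rw [e3]
    rw [rW, M.Q.map_comp]
    simp
  have e4 := associator_naturality (𝟙 A) (𝟙 (M.Q.obj B)) M.mI
  rw [MonoidalCategory.id_tensorHom_id] at e4
  have e5 : (ρ_ (A ⊗ M.Q.obj B)).inv ≫ (α_ A (M.Q.obj B) (𝟙_ V)).hom =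
      𝟙 A ⊗ₘ (ρ_ (M.Q.obj B)).inv := by
    simp only [id_tensorHom]; monoidal
  have st : M.rW (A ⊗ M.Q.obj B) ≫ (α_ A (M.Q.obj B) (M.Q.obj (𝟙_ V))).hom =
      𝟙 A ⊗ₘ ((ρ_ (M.Q.obj B)).inv ≫ (𝟙 (M.Q.obj B) ⊗ₘ M.mI)) := by
    rw [rW, Category.assoc, e4, ← Category.assoc, e5, tensorHom_comp_tensorHom,
      Category.id_comp]
  simp only [aW, hW, tW, M.Q.map_id]
  rw [← Category.assoc, st, tensorHom_comp_tensorHom, Category.id_comp, Category.assoc,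
    inner]

lemma part4 (A B C D : V) :
    M.hW (M.aW A B C) (𝟙 D) ≫ M.aW A (M.tW B C) D ≫
        M.hW (𝟙 A) (M.aW B C D) =
      M.aW (M.tW A B) C D ≫ M.aW A B (M.tW C D) := by
  have key : (α_ (M.Q.obj B) (M.Q.obj C) (M.Q.obj D)).inv ≫
      (M.fus B C ⊗ₘ 𝟙 (M.Q.obj D)) ≫ M.fus (B ⊗ M.Q.obj C) D ≫
      M.Q.map ((α_ B (M.Q.obj C) (M.Q.obj D)).hom ≫ (𝟙 B ⊗ₘ M.fus C D)) =
      (𝟙 (M.Q.obj B) ⊗ₘ M.fus C D) ≫ M.fus B (C ⊗ M.Q.obj D) := by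
    have hp := M.fus_pentagon B C D
    simp only [aW, tW] at hp
    rw [hp, Iso.inv_hom_id_assoc]
  have pent : ((α_ A (M.Q.obj B) (M.Q.obj C)).hom ⊗ₘ 𝟙 (M.Q.obj D)) ≫
      (α_ A (M.Q.obj B ⊗ M.Q.obj C) (M.Q.obj D)).hom =
      (α_ (A ⊗ M.Q.obj B) (M.Q.obj C) (M.Q.obj D)).hom ≫
      (α_ A (M.Q.obj B) (M.Q.obj C ⊗ M.Q.obj D)).hom ≫
      (𝟙 A ⊗ₘ (α_ (M.Q.obj B) (M.Q.obj C) (M.Q.obj D)).inv) := by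
    simp only [tensorHom_id, id_tensorHom]; monoidal
  have h1 := associator_naturality (𝟙 A) (M.fus B C) (𝟙 (M.Q.obj D))
  have h2 := associator_naturality (𝟙 A) (𝟙 (M.Q.obj B)) (M.fus C D)
  rw [MonoidalCategory.id_tensorHom_id] at h2
  simp only [tW] at h1 h2
  simp only [hW, aW, tW, M.Q.map_id]
  have split : ((α_ A (M.Q.obj B) (M.Q.obj C)).hom ≫ (𝟙 A ⊗ₘ M.fus B C)) ⊗ₘ
        𝟙 (M.Q.obj D) =
      ((α_ A (M.Q.obj B) (M.Q.obj C)).hom ⊗ₘ 𝟙 (M.Q.obj D)) ≫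
        ((𝟙 A ⊗ₘ M.fus B C) ⊗ₘ 𝟙 (M.Q.obj D)) := by
    rw [tensorHom_comp_tensorHom, Category.comp_id]
  rw [split]
  simp only [Category.assoc]
  slice_lhs 2 3 => rw [h1]
  slice_lhs 1 2 => rw [pent]
  slice_rhs 2 3 => rw [h2]
  simp only [Category.assoc]
  congr 2
  simp only [tensorHom_comp_tensorHom, Category.id_comp, Category.comp_id, Category.assoc]
  rw [← key]

end MonComonad

theorem statement11 (M : MonComonad V) :
    -- naturality of the warped associator
    (∀ {A A' B B' C C' : V} (f : A ⟶ A') (g : B ⟶ B') (h : C ⟶ C'),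
      M.hW (M.hW f g) h ≫ M.aW A' B' C' = M.aW A B C ≫ M.hW f (M.hW g h)) ∧
    -- naturality of the warped unitors
    (∀ {A B : V} (f : A ⟶ B),
      M.hW (𝟙 (𝟙_ V)) f ≫ M.lW B = M.lW A ≫ f) ∧
    (∀ {A B : V} (f : A ⟶ B), f ≫ M.rW B = M.rW A ≫ M.hW f (𝟙 (𝟙_ V))) ∧
    -- the pentagon
    (∀ A B C D : V,
      M.hW (M.aW A B C) (𝟙 D) ≫ M.aW A (M.tW B C) D ≫
          M.hW (𝟙 A) (M.aW B C D) =
        M.aW (M.tW A B) C D ≫ M.aW A B (M.tW C D)) ∧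
    -- λ_I ∘ ρ_I = 1
    (M.rW (𝟙_ V) ≫ M.lW (𝟙_ V) = 𝟙 (𝟙_ V)) ∧
    -- the three unit axioms
    (∀ A B : V, M.aW (𝟙_ V) A B ≫ M.lW (M.tW A B) = M.hW (M.lW A) (𝟙 B)) ∧
    (∀ A B : V,
      M.hW (M.rW A) (𝟙 B) ≫ M.aW A (𝟙_ V) B ≫ M.hW (𝟙 A) (M.lW B) =
        𝟙 (M.tW A B)) ∧
    (∀ A B : V, M.rW (M.tW A B) ≫ M.aW A B (𝟙_ V) = M.hW (𝟙 A) (M.rW B)) := by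
  exact ⟨fun f g h => MonComonad.part1 f g h, fun f => MonComonad.part2 f,
    fun f => MonComonad.part3 f, MonComonad.part4, MonComonad.part5,
    MonComonad.part6, MonComonad.part7, MonComonad.part8⟩
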